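/- (Per-block Frank-Wolfe descent inequality.) Fix k ∈ {1,…,K}, γ ∈ [0,1] and α ∈ M. Let s_k ∈ argmin_{‖s‖₁ ≤ β} ⟨s, ∇_k f(α)⟩, let α̂ be the vector equal to α except that its k-th block is replaced by (1 − γ)α_k + γ s_k, and let gap_k(α) = max_{‖s‖₁ ≤ β} ⟨α_k − s, ∇_k f(α)⟩. Then f(α̂) ≤ f(α) − γ·gap_k(α) + γ²·C_k/2, where C_k = 4β²·d_k(w)·( c_k·‖A_k‖₁² + μ₁ ). -/

import Mathlib

open scoped RealInnerProductSpace BigOperators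

abbrev Vec (n : ℕ) := EuclideanSpace ℝ (Fin n)

/-- Degree of user `k`: `d_k(w) = Σ_{l≠k} w_{k,l}`. -/
def degW {K : ℕ} (W : Fin K → Fin K → ℝ) (k : Fin K) : ℝ :=
  ∑ l ∈ Finset.univ.filter (fun l => l ≠ k), W k l

/-- The boosting objective
`f(α) = Σ_k d_k(w) c_k log(Σ_i exp(−(A_k α_k)_i)) + (μ₁/2) Σ_{k<l} w_{k,l} ‖α_k − α_l‖²`. -/
noncomputable def fObj {K n : ℕ} {m : Fin K → ℕ}
    (A : ∀ k, Matrix (Fin (m k)) (Fin n) ℝ) (c : Fin K → ℝ)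
    (W : Fin K → Fin K → ℝ) (μ₁ : ℝ) (α : Fin K → Vec n) : ℝ :=
  (∑ k, degW W k * c k *
      Real.log (∑ i, Real.exp (-(Matrix.mulVec (A k) (α k) i))))
    + μ₁ / 2 * ∑ k, ∑ l ∈ Finset.univ.filter (fun l => k < l),
        W k l * ‖α k - α l‖ ^ 2

/-- The partial gradient `∇_k f(α)` of `f` with respect to the block `α_k`. -/
noncomputable def gradBlk {K n : ℕ} (f : (Fin K → Vec n) → ℝ)
    (α : Fin K → Vec n) (k : Fin K) : Vec n :=
  gradient (fun x => f (Function.update α k x)) (α k)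

/-- `‖A‖₁`: the maximum ℓ1 norm of a row of `A`. -/
noncomputable def rowNormOne {m n : ℕ} (A : Matrix (Fin m) (Fin n) ℝ) : ℝ :=
  ⨆ i, ∑ j, |A i j|

/-- The ℓ1 norm on `ℝ^n`. -/
def l1Norm {n : ℕ} (x : Vec n) : ℝ := ∑ j, |x j|

/-- The blockwise Frank-Wolfe surrogate gap
`gap_k(α) = max_{‖s‖₁ ≤ β} ⟨α_k − s, ∇_k f(α)⟩`. -/
noncomputable def blockGap {n : ℕ} (β : ℝ) (x g : Vec n) : ℝ :=
  sSup {v : ℝ | ∃ s : Vec n, l1Norm s ≤ β ∧ v = ⟪x - s, g⟫}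

/-! ### Auxiliary 1-dimensional log-sum-exp lemmas -/

namespace FWAux

variable {p : ℕ}

noncomputable def S (a v : Fin p → ℝ) (t : ℝ) : ℝ := ∑ i, Real.exp (a i + t * v i)

noncomputable def lse (a v : Fin p → ℝ) (t : ℝ) : ℝ := Real.log (S a v t)

noncomputable def N (a v : Fin p → ℝ) (t : ℝ) : ℝ := ∑ i, Real.exp (a i + t * v i) * v i

noncomputable def lseD (a v : Fin p → ℝ) (t : ℝ) : ℝ := N a v t / S a v t

lemma S_pos [Nonempty (Fin p)] (a v : Fin p → ℝ) (t : ℝ) : 0 < S a v t :=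
  Finset.sum_pos (fun i _ => Real.exp_pos _) Finset.univ_nonempty

lemma hasDerivAt_S (a v : Fin p → ℝ) (t : ℝ) : HasDerivAt (S a v) (N a v t) t := by
  apply HasDerivAt.fun_sum
  intro i _
  simpa using (((hasDerivAt_id t).mul_const (v i)).const_add (a i)).exp

lemma hasDerivAt_N (a v : Fin p → ℝ) (t : ℝ) :
    HasDerivAt (N a v) (∑ i, Real.exp (a i + t * v i) * v i * v i) t := by
  apply HasDerivAt.fun_sum
  intro i _
  simpa using ((((hasDerivAt_id t).mul_const (v i)).const_add (a i)).exp).mul_const (v i)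

lemma hasDerivAt_lse (a v : Fin p → ℝ) (t : ℝ) : HasDerivAt (lse a v) (lseD a v t) t := by
  rcases isEmpty_or_nonempty (Fin p) with h | h
  · have h1 : lse a v = fun _ => Real.log 0 := by
      funext x; simp [lse, S]
    have h2 : lseD a v t = 0 := by simp [lseD, N, S]
    rw [h1, h2]; exact hasDerivAt_const _ _
  · exact (hasDerivAt_S a v t).log (S_pos a v t).ne'

lemma hasDerivAt_lseD [Nonempty (Fin p)] (a v : Fin p → ℝ) (t : ℝ) :
    HasDerivAt (lseD a v)
      (((∑ i, Real.exp (a i + t * v i) * v i * v i) * S a v t - N a v t * N a v t) / S a v t ^ 2) t :=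
  (hasDerivAt_N a v t).div (hasDerivAt_S a v t) (S_pos a v t).ne'

lemma lseD_deriv_le (a v : Fin p → ℝ) {M : ℝ} (hv : ∀ i, |v i| ≤ M) (t : ℝ) :
    ((∑ i, Real.exp (a i + t * v i) * v i * v i) * S a v t - N a v t * N a v t) / S a v t ^ 2
      ≤ M ^ 2 := by
  rcases isEmpty_or_nonempty (Fin p) with h | h
  · simp [S, N]; positivity
  · have hS := S_pos a v t
    rw [div_le_iff₀ (by positivity)]
    have h1 : (∑ i, Real.exp (a i + t * v i) * v i * v i) ≤ M ^ 2 * S a v t := by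
      rw [S, Finset.mul_sum]
      apply Finset.sum_le_sum
      intro i _
      have h2 : v i ^ 2 ≤ M ^ 2 := sq_le_sq' (neg_abs_le (v i) |>.trans'
        (by linarith [hv i, neg_le_neg (hv i)])) ((le_abs_self _).trans (hv i))
      nlinarith [Real.exp_pos (a i + t * v i)]
    nlinarith [sq_nonneg (N a v t), sq_nonneg (S a v t)]

lemma lseD_le (a v : Fin p → ℝ) {M : ℝ} (hv : ∀ i, |v i| ≤ M) (hM : 0 ≤ M)
    {t : ℝ} (ht : 0 ≤ t) : lseD a v t ≤ lseD a v 0 + M ^ 2 * t := by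
  have hmono : MonotoneOn (fun x => M ^ 2 * x - lseD a v x) (Set.Ici (0:ℝ)) := by
    rcases isEmpty_or_nonempty (Fin p) with h | h
    · have h1 : (fun x => M ^ 2 * x - lseD a v x) = fun x => M ^ 2 * x := by
        funext x; simp [lseD, N, S]
      rw [h1]
      exact fun x _ y _ hxy => mul_le_mul_of_nonneg_left hxy (by positivity)
    · have hd : ∀ x : ℝ, HasDerivAt (fun x => M ^ 2 * x - lseD a v x)
          (M ^ 2 - ((∑ i, Real.exp (a i + x * v i) * v i * v i) * S a v x
            - N a v x * N a v x) / S a v x ^ 2) x := by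
        intro x
        simpa using ((hasDerivAt_id x).const_mul (M ^ 2)).fun_sub (hasDerivAt_lseD a v x)
      apply monotoneOn_of_deriv_nonneg (convex_Ici 0)
      · exact Continuous.continuousOn
          (Differentiable.continuous (fun x => (hd x).differentiableAt))
      · intro x _; exact (hd x).differentiableAt.differentiableWithinAt
      · intro x _
        rw [(hd x).deriv]
        have := lseD_deriv_le a v hv x
        linarith
  have h0 : (0:ℝ) ∈ Set.Ici (0:ℝ) := Set.mem_Ici.2 le_rfl
  have := hmono h0 (Set.mem_Ici.2 ht) ht
  simp only at this
  linarith

lemma lse_taylor (a v : Fin p → ℝ) {M : ℝ} (hv : ∀ i, |v i| ≤ M) (hM : 0 ≤ M)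
    {γ : ℝ} (hγ : 0 ≤ γ) :
    lse a v γ ≤ lse a v 0 + γ * lseD a v 0 + M ^ 2 * γ ^ 2 / 2 := by
  have hanti : AntitoneOn (fun x => lse a v x - x * lseD a v 0 - M ^ 2 * x ^ 2 / 2)
      (Set.Ici (0:ℝ)) := by
    have hd : ∀ x : ℝ, HasDerivAt (fun x => lse a v x - x * lseD a v 0 - M ^ 2 * x ^ 2 / 2)
        (lseD a v x - lseD a v 0 - M ^ 2 * x) x := by
      intro x
      have h1 := (hasDerivAt_lse a v x).fun_sub ((hasDerivAt_id x).mul_const (lseD a v 0))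
      have h2 := (((hasDerivAt_pow 2 x).const_mul (M ^ 2)).div_const 2)
      have h3 := h1.fun_sub h2
      exact h3.congr_deriv (by push_cast; ring)
    apply antitoneOn_of_deriv_nonpos (convex_Ici 0)
    · exact Continuous.continuousOn (Differentiable.continuous (fun x => (hd x).differentiableAt))
    · intro x _; exact (hd x).differentiableAt.differentiableWithinAt
    · intro x hx
      rw [(hd x).deriv]
      rw [interior_Ici] at hx
      have := lseD_le a v hv hM (le_of_lt hx)
      linarith
  have := hanti (Set.mem_Ici.2 (le_refl (0:ℝ))) (Set.mem_Ici.2 hγ) hγ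
  simp only at this
  linarith

end FWAux

/-! ### Auxiliary multivariate lemmas -/

namespace FWAux2

lemma sum_sq_le_sq_sum {ι : Type*} (s : Finset ι) (f : ι → ℝ) (h : ∀ i ∈ s, 0 ≤ f i) :
    ∑ i ∈ s, f i ^ 2 ≤ (∑ i ∈ s, f i) ^ 2 := by
  have h1 : ∑ i ∈ s, f i ^ 2 ≤ ∑ i ∈ s, f i * ∑ j ∈ s, f j := by
    apply Finset.sum_le_sum; intro i hi
    have := Finset.single_le_sum h hi
    nlinarith [h i hi]
  calc ∑ i ∈ s, f i ^ 2 ≤ ∑ i ∈ s, f i * ∑ j ∈ s, f j := h1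
  _ = (∑ i ∈ s, f i) ^ 2 := by rw [← Finset.sum_mul]; ring

lemma norm_sq_le_l1_sq {n : ℕ} (u : Vec n) : ‖u‖ ^ 2 ≤ (l1Norm u) ^ 2 := by
  rw [EuclideanSpace.norm_eq, Real.sq_sqrt (by positivity)]
  have h : ∀ i, ‖u i‖ ^ 2 = |u i| ^ 2 := fun i => by rw [Real.norm_eq_abs]
  simp_rw [h]
  exact sum_sq_le_sq_sum _ _ (fun i _ => abs_nonneg _)

lemma diff_lse {p q : ℕ} (B : Matrix (Fin p) (Fin q) ℝ) :
    Differentiable ℝ (fun y : Vec q => Real.log (∑ i, Real.exp (-(B.mulVec y i)))) := by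
  rcases isEmpty_or_nonempty (Fin p) with h | h
  · simp only [Finset.univ_eq_empty, Finset.sum_empty]
    exact differentiable_const _
  · have hmv : ∀ i, Differentiable ℝ (fun y : Vec q => B.mulVec y i) := by
      intro i
      simp only [Matrix.mulVec, dotProduct]
      apply Differentiable.fun_sum
      intro j _
      have := ((EuclideanSpace.proj (𝕜 := ℝ) j).differentiable (𝕜 := ℝ)).const_mul (B i j)
      simpa [PiLp.proj_apply] using this
    intro y
    have hS : (0:ℝ) < ∑ i, Real.exp (-(B.mulVec y i)) :=
      Finset.sum_pos (fun i _ => Real.exp_pos _) Finset.univ_nonempty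
    exact DifferentiableAt.log (DifferentiableAt.fun_sum fun i _ => ((hmv i y).neg).exp) hS.ne'

lemma diff_normsq {q : ℕ} (b : Vec q) : Differentiable ℝ (fun y : Vec q => ‖y - b‖ ^ 2) := by
  have h : (fun y : Vec q => ‖y - b‖ ^ 2) = fun y => (inner ℝ (y - b) (y - b) : ℝ) := by
    funext y; rw [real_inner_self_eq_norm_sq]
  rw [h]
  exact fun y => DifferentiableAt.inner ℝ ((differentiable_id.sub_const b) y)
    ((differentiable_id.sub_const b) y)

lemma quad_update {K n : ℕ} (W : Fin K → Fin K → ℝ) (hWsym : ∀ k l, W k l = W l k)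
    (α : Fin K → Vec n) (k : Fin K) (y : Vec n) :
    (∑ j, ∑ l ∈ Finset.univ.filter (fun l => j < l),
        W j l * ‖Function.update α k y j - Function.update α k y l‖ ^ 2)
      = (∑ j, ∑ l ∈ Finset.univ.filter (fun l => j < l), W j l * ‖α j - α l‖ ^ 2)
        + ∑ l ∈ Finset.univ.filter (fun l => l ≠ k),
            W k l * (‖y - α l‖ ^ 2 - ‖α k - α l‖ ^ 2) := by
  have hupd_ne : ∀ j, j ≠ k → Function.update α k y j = α j :=
    fun j hj => Function.update_of_ne hj y α
  have hupd_k : Function.update α k y k = y := Function.update_self k y α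
  have key : ∑ j, ∑ l ∈ Finset.univ.filter (fun l => j < l),
      (W j l * ‖Function.update α k y j - Function.update α k y l‖ ^ 2
        - W j l * ‖α j - α l‖ ^ 2)
      = ∑ l ∈ Finset.univ.filter (fun l => l ≠ k),
          W k l * (‖y - α l‖ ^ 2 - ‖α k - α l‖ ^ 2) := by
    rw [← Finset.add_sum_erase _ _ (Finset.mem_univ k)]
    have h1 : ∑ l ∈ Finset.univ.filter (fun l => k < l),
        (W k l * ‖Function.update α k y k - Function.update α k y l‖ ^ 2
          - W k l * ‖α k - α l‖ ^ 2)
        = ∑ l ∈ Finset.univ.filter (fun l => k < l),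
            W k l * (‖y - α l‖ ^ 2 - ‖α k - α l‖ ^ 2) := by
      apply Finset.sum_congr rfl
      intro l hl
      have hlk : l ≠ k := by
        simp only [Finset.mem_filter] at hl
        exact (ne_of_lt hl.2).symm
      rw [hupd_k, hupd_ne l hlk]; ring
    have h2 : ∑ j ∈ Finset.univ.erase k, ∑ l ∈ Finset.univ.filter (fun l => j < l),
        (W j l * ‖Function.update α k y j - Function.update α k y l‖ ^ 2
          - W j l * ‖α j - α l‖ ^ 2)
        = ∑ j ∈ Finset.univ.filter (fun j => j < k),
            W k j * (‖y - α j‖ ^ 2 - ‖α k - α j‖ ^ 2) := by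
      have hinner : ∀ j ∈ Finset.univ.erase k,
          ∑ l ∈ Finset.univ.filter (fun l => j < l),
            (W j l * ‖Function.update α k y j - Function.update α k y l‖ ^ 2
              - W j l * ‖α j - α l‖ ^ 2)
          = if j < k then W k j * (‖y - α j‖ ^ 2 - ‖α k - α j‖ ^ 2) else 0 := by
        intro j hj
        have hjk : j ≠ k := (Finset.mem_erase.1 hj).1
        have hterm : ∀ l ∈ Finset.univ.filter (fun l => j < l),
            (W j l * ‖Function.update α k y j - Function.update α k y l‖ ^ 2
              - W j l * ‖α j - α l‖ ^ 2)
            = if l = k then W k j * (‖y - α j‖ ^ 2 - ‖α k - α j‖ ^ 2) else 0 := by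
          intro l _
          by_cases hlk : l = k
          · subst hlk
            rw [hupd_ne j hjk, hupd_k, if_pos rfl, hWsym j l,
              norm_sub_rev (α j) y, norm_sub_rev (α j) (α l)]
            ring
          · rw [hupd_ne j hjk, hupd_ne l hlk, if_neg hlk]; ring
        rw [Finset.sum_congr rfl hterm, Finset.sum_ite_eq' _ k
          (fun _ => W k j * (‖y - α j‖ ^ 2 - ‖α k - α j‖ ^ 2))]
        simp only [Finset.mem_filter, Finset.mem_univ, true_and]
      rw [Finset.sum_congr rfl hinner, ← Finset.sum_filter]
      apply Finset.sum_congr _ (fun _ _ => rfl)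
      ext j
      simp only [Finset.mem_filter, Finset.mem_erase, Finset.mem_univ, true_and,
        and_iff_right_iff_imp, ne_eq]
      exact fun h => ⟨ne_of_lt h, trivial⟩
    rw [h1, h2]
    rw [← Finset.sum_filter_add_sum_filter_not (Finset.univ.filter (fun l => l ≠ k))
      (fun l => l < k) (fun l => W k l * (‖y - α l‖ ^ 2 - ‖α k - α l‖ ^ 2))]
    have e1 : (Finset.univ.filter (fun l => l ≠ k)).filter (fun l => l < k)
        = Finset.univ.filter (fun j : Fin K => j < k) := by
      ext j
      simp only [Finset.mem_filter, Finset.mem_univ, true_and, ne_eq, Fin.lt_def, Fin.ext_iff]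
      omega
    have e2 : (Finset.univ.filter (fun l => l ≠ k)).filter (fun l => ¬ l < k)
        = Finset.univ.filter (fun l : Fin K => k < l) := by
      ext j
      simp only [Finset.mem_filter, Finset.mem_univ, true_and, ne_eq, Fin.lt_def, Fin.ext_iff,
        not_lt]
      omega
    rw [e1, e2]
    ring
  have expand : ∑ j, ∑ l ∈ Finset.univ.filter (fun l => j < l),
      (W j l * ‖Function.update α k y j - Function.update α k y l‖ ^ 2
        - W j l * ‖α j - α l‖ ^ 2)
      = (∑ j, ∑ l ∈ Finset.univ.filter (fun l => j < l),
          W j l * ‖Function.update α k y j - Function.update α k y l‖ ^ 2)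
        - ∑ j, ∑ l ∈ Finset.univ.filter (fun l => j < l), W j l * ‖α j - α l‖ ^ 2 := by
    rw [← Finset.sum_sub_distrib]
    exact Finset.sum_congr rfl fun j _ => by rw [← Finset.sum_sub_distrib]
  rw [expand] at key
  linarith

end FWAux2

/-- Per-block Frank-Wolfe descent inequality.
If `s_k` minimizes `⟨s, ∇_k f(α)⟩` over the ℓ1 ball of radius `β`, then
`f(α̂) ≤ f(α) − γ·gap_k(α) + γ²C_k/2` with
`C_k = 4β² d_k(w)(c_k ‖A_k‖₁² + μ₁)`. -/
theorem per_block_frank_wolfe_descent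
    (K n : ℕ) (hK : 1 ≤ K) (m : Fin K → ℕ)
    (A : ∀ k, Matrix (Fin (m k)) (Fin n) ℝ)
    (c : Fin K → ℝ) (hc : ∀ k, 0 ≤ c k)
    (W : Fin K → Fin K → ℝ) (hWsym : ∀ k l, W k l = W l k)
    (hWnn : ∀ k l, k ≠ l → 0 ≤ W k l)
    (μ₁ : ℝ) (hμ₁ : 0 ≤ μ₁) (β : ℝ) (hβ : 0 < β)
    (k : Fin K) (γ : ℝ) (hγ0 : 0 ≤ γ) (hγ1 : γ ≤ 1)
    (α : Fin K → Vec n) (hα : ∀ j, l1Norm (α j) ≤ β)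
    (s : Vec n) (hs : l1Norm s ≤ β)
    (hargmin : ∀ s' : Vec n, l1Norm s' ≤ β →
      ⟪s, gradBlk (fObj A c W μ₁) α k⟫ ≤ ⟪s', gradBlk (fObj A c W μ₁) α k⟫) :
    fObj A c W μ₁ (Function.update α k ((1 - γ) • α k + γ • s))
      ≤ fObj A c W μ₁ α
        - γ * blockGap β (α k) (gradBlk (fObj A c W μ₁) α k)
        + γ ^ 2 * (4 * β ^ 2 * degW W k * (c k * rowNormOne (A k) ^ 2 + μ₁)) / 2 := by
  classical
  set g := gradBlk (fObj A c W μ₁) α k with hgdef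
  set u : Vec n := s - α k with hudef
  set a : Fin (m k) → ℝ := fun i => -((A k).mulVec (α k) i) with hadef
  set v : Fin (m k) → ℝ := fun i => -((A k).mulVec u i) with hvdef
  -- basic nonnegativity facts
  have hl1nn : ∀ w : Vec n, 0 ≤ l1Norm w := fun w => Finset.sum_nonneg fun _ _ => abs_nonneg _
  have hrow : ∀ i, (∑ j, |A k i j|) ≤ rowNormOne (A k) := by
    intro i
    rw [rowNormOne]
    exact le_ciSup (f := fun i => ∑ j, |A k i j|) ((Set.finite_range _).bddAbove) i
  have hM0 : 0 ≤ rowNormOne (A k) := by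
    rcases isEmpty_or_nonempty (Fin (m k)) with h | h
    · rw [rowNormOne, Real.iSup_of_isEmpty]
    · exact le_trans (Finset.sum_nonneg fun j _ => abs_nonneg _) (hrow (Classical.arbitrary _))
  have hdk0 : 0 ≤ degW W k :=
    Finset.sum_nonneg fun l hl => hWnn k l (Ne.symm (Finset.mem_filter.1 hl).2)
  have hl1u : l1Norm u ≤ 2 * β := by
    have h1 : l1Norm u ≤ l1Norm s + l1Norm (α k) := by
      rw [hudef]
      simp only [l1Norm, ← Finset.sum_add_distrib]
      apply Finset.sum_le_sum
      intro j _
      calc |(s - α k) j| = |s j - α k j| := by rw [PiLp.sub_apply]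
      _ ≤ |s j| + |α k j| := abs_sub _ _
    linarith [hα k, hs]
  have hv_bound : ∀ i, |v i| ≤ 2 * β * rowNormOne (A k) := by
    intro i
    have hv_eq : |v i| = |(A k).mulVec u i| := by
      simp only [hvdef]; exact abs_neg _
    rw [hv_eq]
    calc |(A k).mulVec u i| = |∑ j, A k i j * u j| := by
          simp [Matrix.mulVec, dotProduct]
    _ ≤ ∑ j, |A k i j * u j| := Finset.abs_sum_le_sum_abs _ _
    _ = ∑ j, |A k i j| * |u j| := by simp [abs_mul]
    _ ≤ ∑ j, |A k i j| * l1Norm u := by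
          apply Finset.sum_le_sum
          intro j _
          exact mul_le_mul_of_nonneg_left
            (Finset.single_le_sum (f := fun j => |u j|) (fun i _ => abs_nonneg _)
              (Finset.mem_univ j)) (abs_nonneg _)
    _ = (∑ j, |A k i j|) * l1Norm u := (Finset.sum_mul _ _ _).symm
    _ ≤ rowNormOne (A k) * (2 * β) :=
          mul_le_mul (hrow i) hl1u (hl1nn u) hM0
    _ = 2 * β * rowNormOne (A k) := by ring
  have hMv0 : 0 ≤ 2 * β * rowNormOne (A k) := mul_nonneg (by linarith) hM0
  have hu4 : ‖u‖ ^ 2 ≤ 4 * β ^ 2 := by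
    have h1 := FWAux2.norm_sq_le_l1_sq u
    have h2 : (l1Norm u) ^ 2 ≤ (2 * β) ^ 2 := pow_le_pow_left₀ (hl1nn u) hl1u 2
    nlinarith
  -- the key pointwise rewrite of the objective after a block update
  have hlse_upd : ∀ y : Vec n,
      (∑ j, degW W j * c j *
        Real.log (∑ i, Real.exp (-((A j).mulVec (Function.update α k y j) i))))
      = (∑ j, degW W j * c j * Real.log (∑ i, Real.exp (-((A j).mulVec (α j) i))))
        + (degW W k * c k * Real.log (∑ i, Real.exp (-((A k).mulVec y i)))
          - degW W k * c k * Real.log (∑ i, Real.exp (-((A k).mulVec (α k) i)))) := by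
    intro y
    rw [← Finset.add_sum_erase _ _ (Finset.mem_univ k),
      ← Finset.add_sum_erase _ (fun j => degW W j * c j *
        Real.log (∑ i, Real.exp (-((A j).mulVec (α j) i)))) (Finset.mem_univ k)]
    rw [Function.update_self]
    have h1 : ∑ j ∈ Finset.univ.erase k, degW W j * c j *
        Real.log (∑ i, Real.exp (-((A j).mulVec (Function.update α k y j) i)))
        = ∑ j ∈ Finset.univ.erase k, degW W j * c j *
            Real.log (∑ i, Real.exp (-((A j).mulVec (α j) i))) := by
      apply Finset.sum_congr rfl
      intro j hj
      rw [Function.update_of_ne (Finset.mem_erase.1 hj).1]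
    rw [h1]; ring
  have key : ∀ y : Vec n, fObj A c W μ₁ (Function.update α k y)
      = fObj A c W μ₁ α
        + degW W k * c k * (Real.log (∑ i, Real.exp (-((A k).mulVec y i)))
            - Real.log (∑ i, Real.exp (-((A k).mulVec (α k) i))))
        + μ₁ / 2 * ∑ l ∈ Finset.univ.filter (fun l => l ≠ k),
            W k l * (‖y - α l‖ ^ 2 - ‖α k - α l‖ ^ 2) := by
    intro y
    simp only [fObj]
    rw [hlse_upd y, FWAux2.quad_update W hWsym α k y]
    ring
  -- 1D reparametrization along the segment
  have ha_arg : ∀ (t : ℝ) (i : Fin (m k)), -((A k).mulVec (α k + t • u) i) = a i + t * v i := by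
    intro t i
    have h1 : (A k).mulVec (α k + t • u) i = (A k).mulVec (α k) i + t * (A k).mulVec u i := by
      rw [Matrix.mulVec_add, Matrix.mulVec_smul]
      simp
    rw [h1]
    simp only [hadef, hvdef]
    ring
  have hSt : ∀ t : ℝ, FWAux.S a v t = ∑ i, Real.exp (-((A k).mulVec (α k + t • u) i)) := by
    intro t
    rw [FWAux.S]
    exact Finset.sum_congr rfl fun i _ => by rw [ha_arg t i]
  have hS0 : FWAux.S a v 0 = ∑ i, Real.exp (-((A k).mulVec (α k) i)) := by
    rw [FWAux.S]
    apply Finset.sum_congr rfl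
    intro i _
    simp only [hadef]
    norm_num
  have hnorm : ∀ (t : ℝ) (l : Fin K), ‖α k + t • u - α l‖ ^ 2
      = ‖α k - α l‖ ^ 2 + 2 * (t * (inner ℝ (α k - α l) u : ℝ)) + t ^ 2 * ‖u‖ ^ 2 := by
    intro t l
    have h1 : α k + t • u - α l = (α k - α l) + t • u := by abel
    rw [h1, norm_add_sq_real, real_inner_smul_right, norm_smul]
    simp only [Real.norm_eq_abs, mul_pow, sq_abs]
  set Qb := ∑ l ∈ Finset.univ.filter (fun l => l ≠ k), W k l * (inner ℝ (α k - α l) u : ℝ)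
    with hQbdef
  have hquadsum : ∀ t : ℝ,
      (∑ l ∈ Finset.univ.filter (fun l => l ≠ k),
        W k l * (‖α k + t • u - α l‖ ^ 2 - ‖α k - α l‖ ^ 2))
      = 2 * t * Qb + t ^ 2 * ‖u‖ ^ 2 * degW W k := by
    intro t
    have h1 : ∀ l ∈ Finset.univ.filter (fun l => l ≠ k),
        W k l * (‖α k + t • u - α l‖ ^ 2 - ‖α k - α l‖ ^ 2)
        = 2 * t * (W k l * (inner ℝ (α k - α l) u : ℝ)) + t ^ 2 * ‖u‖ ^ 2 * W k l := by
      intro l _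
      rw [hnorm t l]
      ring
    rw [Finset.sum_congr rfl h1, Finset.sum_add_distrib, ← Finset.mul_sum, ← Finset.mul_sum,
      hQbdef, degW]
  have hphit : ∀ t : ℝ, fObj A c W μ₁ (Function.update α k (α k + t • u))
      = (fObj A c W μ₁ α - degW W k * c k * FWAux.lse a v 0)
        + degW W k * c k * FWAux.lse a v t + μ₁ * Qb * t
        + (μ₁ / 2 * degW W k * ‖u‖ ^ 2) * t ^ 2 := by
    intro t
    rw [key (α k + t • u), hquadsum t]
    have e1 : Real.log (∑ i, Real.exp (-((A k).mulVec (α k + t • u : Vec n) i))) = FWAux.lse a v t := by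
      rw [FWAux.lse, hSt t, WithLp.ofLp_add, WithLp.ofLp_smul]
    have e2 : Real.log (∑ i, Real.exp (-((A k).mulVec (α k) i))) = FWAux.lse a v 0 := by
      rw [FWAux.lse, hS0]
    rw [e1, e2]
    ring
  have hphiD : ∀ t : ℝ, HasDerivAt (fun t : ℝ => fObj A c W μ₁ (Function.update α k (α k + t • u)))
      (degW W k * c k * FWAux.lseD a v t + μ₁ * Qb + (μ₁ / 2 * degW W k * ‖u‖ ^ 2) * (2 * t)) t := by
    intro t
    have hfun : (fun t : ℝ => fObj A c W μ₁ (Function.update α k (α k + t • u)))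
        = fun t : ℝ => (fObj A c W μ₁ α - degW W k * c k * FWAux.lse a v 0)
          + degW W k * c k * FWAux.lse a v t + μ₁ * Qb * t
          + (μ₁ / 2 * degW W k * ‖u‖ ^ 2) * t ^ 2 := funext hphit
    rw [hfun]
    have h1 := ((FWAux.hasDerivAt_lse a v t).const_mul (degW W k * c k)).const_add
      (fObj A c W μ₁ α - degW W k * c k * FWAux.lse a v 0)
    have h2 := h1.add ((hasDerivAt_id t).const_mul (μ₁ * Qb))
    have h3 := h2.add ((hasDerivAt_pow 2 t).const_mul (μ₁ / 2 * degW W k * ‖u‖ ^ 2))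
    exact h3.congr_deriv (by push_cast; ring)
  -- gradient identification
  have hFeq : (fun x : Vec n => fObj A c W μ₁ (Function.update α k x))
      = fun y : Vec n => fObj A c W μ₁ α
          + degW W k * c k * (Real.log (∑ i, Real.exp (-((A k).mulVec y i)))
              - Real.log (∑ i, Real.exp (-((A k).mulVec (α k) i))))
          + μ₁ / 2 * ∑ l ∈ Finset.univ.filter (fun l => l ≠ k),
              W k l * (‖y - α l‖ ^ 2 - ‖α k - α l‖ ^ 2) := funext key
  have hFdiff : DifferentiableAt ℝ (fun x : Vec n => fObj A c W μ₁ (Function.update α k x))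
      (α k) := by
    rw [hFeq]
    apply DifferentiableAt.add
    · apply DifferentiableAt.add (differentiableAt_const _)
      exact (((FWAux2.diff_lse (A k)) (α k)).sub_const _).const_mul _
    · apply DifferentiableAt.const_mul
      exact DifferentiableAt.fun_sum fun l _ =>
        ((FWAux2.diff_normsq (α l) (α k)).sub_const _).const_mul _
  have hginner : ∀ w : Vec n, (inner ℝ g w : ℝ)
      = fderiv ℝ (fun x : Vec n => fObj A c W μ₁ (Function.update α k x)) (α k) w := by
    intro w
    rw [hgdef]
    unfold gradBlk gradient
    exact InnerProductSpace.toDual_symm_apply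
  have hl0 : HasDerivAt (fun t : ℝ => α k + t • u) u 0 := by
    simpa using ((hasDerivAt_id (0:ℝ)).smul_const u).const_add (α k)
  have hchain : HasDerivAt (fun t : ℝ => fObj A c W μ₁ (Function.update α k (α k + t • u)))
      (fderiv ℝ (fun x : Vec n => fObj A c W μ₁ (Function.update α k x)) (α k) u) 0 := by
    have hd := hFdiff.hasFDerivAt
    have h00 : (α k : Vec n) = α k + (0:ℝ) • u := by simp
    rw [h00] at hd
    have hcomp := hd.comp_hasDerivAt 0 hl0
    rw [← h00] at hcomp
    exact hcomp
  have hE : fderiv ℝ (fun x : Vec n => fObj A c W μ₁ (Function.update α k x)) (α k) u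
      = degW W k * c k * FWAux.lseD a v 0 + μ₁ * Qb := by
    have h1 := hchain.unique (hphiD 0)
    rw [h1]
    ring
  -- the gap is attained at s
  have hgapeq : blockGap β (α k) g = (inner ℝ (α k - s) g : ℝ) := by
    apply IsGreatest.csSup_eq
    constructor
    · exact ⟨s, hs, rfl⟩
    · rintro x ⟨s', hs', rfl⟩
      rw [inner_sub_left, inner_sub_left]
      exact sub_le_sub_left (hargmin s' hs') _
  have hgap_val : (inner ℝ (α k - s) g : ℝ)
      = -(degW W k * c k * FWAux.lseD a v 0 + μ₁ * Qb) := by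
    have h1 : α k - s = -u := by rw [hudef]; abel
    rw [h1, inner_neg_left, real_inner_comm]
    rw [hginner u, hE]
  -- final assembly
  have hupd2 : (1 - γ) • α k + γ • s = α k + γ • u := by
    rw [hudef]; module
  rw [hupd2, hgapeq, hgap_val, hphit γ]
  have htay := FWAux.lse_taylor a v hv_bound hMv0 hγ0
  have hA2 : degW W k * c k * FWAux.lse a v γ ≤ degW W k * c k *
      (FWAux.lse a v 0 + γ * FWAux.lseD a v 0 + (2 * β * rowNormOne (A k)) ^ 2 * γ ^ 2 / 2) :=
    mul_le_mul_of_nonneg_left htay (mul_nonneg hdk0 (hc k))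
  have hB2 : (μ₁ / 2 * degW W k * ‖u‖ ^ 2) * γ ^ 2 ≤ (μ₁ / 2 * degW W k * (4 * β ^ 2)) * γ ^ 2 :=
    mul_le_mul_of_nonneg_right (mul_le_mul_of_nonneg_left hu4
      (mul_nonneg (by linarith) hdk0)) (sq_nonneg γ)
  nlinarith [hA2, hB2]
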